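/- For every n ≥ 0, the 1/2-Changhee polynomial satisfies Ch_{n,1/2}(x) = ∑_{m=0}^n ∑_{j=0}^m (x/2)^j S₁(m,j) Ch_{n-m,1/2} binom(n,m), as an identity of polynomials in x over ℚ. -/

import Mathlib

open Finset Polynomial

/-- Signed Stirling numbers of the first kind. -/
noncomputable def stirling1 (n m : ℕ) : ℚ :=
  (∏ i ∈ Finset.range n, (Polynomial.X - Polynomial.C (i : ℚ))).coeff m

/-- The `1/2`-Changhee numbers `Ch_{n,1/2} = (-1)^n n! C_n / 4^n`. -/
noncomputable def changheeHalf (n : ℕ) : ℚ :=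
  (-1) ^ n * (n.factorial : ℚ) * (catalan n : ℚ) / 4 ^ n

/-- If `Ch` is the sequence of `1/2`-Changhee polynomials, defined by the generating
function `(2/(1+√(1+t)))·(1+t)^{x/2} = ∑ Ch_{n,1/2}(x) t^n/n!` in `ℚ[x][[t]]`
(with `√(1+t)` and `(1+t)^{x/2}` the binomial series), then
`Ch_{n,1/2}(x) = ∑_{m=0}^n ∑_{j=0}^m (x/2)^j S₁(m,j) Ch_{n-m,1/2} binom(n,m)`. -/
lemma catalan_recQ (m : ℕ) :
    ((m : ℚ) + 2) * catalan (m + 1) = 2 * (2 * m + 1) * catalan m := by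
  have h1 := succ_mul_catalan_eq_centralBinom (m + 1)
  have h2 := Nat.succ_mul_centralBinom_succ m
  have h3 := succ_mul_catalan_eq_centralBinom m
  have q1 : ((m : ℚ) + 1 + 1) * catalan (m + 1) = Nat.centralBinom (m + 1) := by
    exact_mod_cast congrArg (Nat.cast : ℕ → ℚ) h1
  have q2 : ((m : ℚ) + 1) * Nat.centralBinom (m + 1)
      = 2 * (2 * m + 1) * Nat.centralBinom m := by exact_mod_cast congrArg (Nat.cast : ℕ → ℚ) h2
  have q3 : ((m : ℚ) + 1) * catalan m = Nat.centralBinom m := by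
    exact_mod_cast congrArg (Nat.cast : ℕ → ℚ) h3
  have hm : ((m : ℚ) + 1) ≠ 0 := by positivity
  have key : ((m : ℚ) + 1) * (((m : ℚ) + 2) * catalan (m + 1))
      = ((m : ℚ) + 1) * (2 * (2 * m + 1) * catalan m) := by
    linear_combination ((m : ℚ) + 1) * q1 + q2 - 2 * (2 * (m : ℚ) + 1) * q3
  exact mul_left_cancel₀ hm key

lemma prod_half' (m : ℕ) :
    (4 : ℚ) ^ (m + 1) * ∏ i ∈ Finset.range (m + 1), ((1 : ℚ) / 2 - i)
      = 2 * (-1) ^ m * ((m + 1).factorial : ℚ) * catalan m := by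
  induction m with
  | zero => norm_num
  | succ m ih =>
    rw [Finset.prod_range_succ]
    push_cast [Nat.factorial_succ] at ih ⊢
    linear_combination (4 * ((1 : ℚ) / 2 - ((m : ℚ) + 1))) * ih
      + (2 * (-1 : ℚ) ^ m * ((m : ℚ) + 1) * (m.factorial : ℚ)) * catalan_recQ m

lemma changheeHalf_div (k : ℕ) :
    changheeHalf k / (k.factorial : ℚ) = (-1) ^ k * (catalan k : ℚ) / 4 ^ k := by
  have h : (k.factorial : ℚ) ≠ 0 := Nat.cast_ne_zero.2 k.factorial_ne_zero
  rw [changheeHalf]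
  field_simp

lemma numGF :
    (PowerSeries.mk fun k => (changheeHalf k / (k.factorial : ℚ))) *
      ((1 : PowerSeries ℚ) + PowerSeries.mk fun k =>
        (∏ i ∈ Finset.range k, ((1 : ℚ) / 2 - i)) / (k.factorial : ℚ)) = 2 := by
  ext n
  rw [mul_add, mul_one, map_add, PowerSeries.coeff_mul,
    Finset.Nat.sum_antidiagonal_eq_sum_range_succ_mk]
  simp only [PowerSeries.coeff_mk]
  cases n with
  | zero =>
    rw [PowerSeries.coeff_zero_eq_constantCoeff, map_ofNat]
    norm_num [changheeHalf]
  | succ n =>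
    have hrhs : (PowerSeries.coeff (R := ℚ) (n + 1)) 2 = 0 := by
      rw [show (2 : PowerSeries ℚ) = PowerSeries.C (R := ℚ) 2 from (map_ofNat (PowerSeries.C (R := ℚ)) 2).symm, PowerSeries.coeff_C]
      simp
    rw [hrhs, Finset.sum_range_succ]
    have hb0 : (∏ i ∈ Finset.range (n + 1 - (n + 1)), ((1 : ℚ) / 2 - i)) /
        ((n + 1 - (n + 1)).factorial : ℚ) = 1 := by simp
    rw [hb0, mul_one]
    have hterm : ∀ k ∈ Finset.range (n + 1),
        changheeHalf k / (k.factorial : ℚ) *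
          ((∏ i ∈ Finset.range (n + 1 - k), ((1 : ℚ) / 2 - i)) / ((n + 1 - k).factorial : ℚ))
        = 2 * (-1) ^ n / 4 ^ (n + 1) * ((catalan k : ℚ) * (catalan (n - k) : ℚ)) := by
      intro k hk
      have hkn : k ≤ n := Nat.lt_succ_iff.mp (Finset.mem_range.mp hk)
      have hk1 : n + 1 - k = (n - k) + 1 := by omega
      have h4 : ((4 : ℚ)) ^ ((n - k) + 1) ≠ 0 := by positivity
      have hf : (((n - k) + 1).factorial : ℚ) ≠ 0 := Nat.cast_ne_zero.2 (Nat.factorial_ne_zero _)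
      have e : (∏ i ∈ Finset.range ((n - k) + 1), ((1 : ℚ) / 2 - i))
          = 2 * (-1) ^ (n - k) * (((n - k) + 1).factorial : ℚ) * catalan (n - k)
            / 4 ^ ((n - k) + 1) := by
        rw [eq_div_iff h4]; linear_combination prod_half' (n - k)
      rw [changheeHalf_div, hk1, e,
        show ((-1 : ℚ)) ^ n = (-1) ^ k * (-1) ^ (n - k) by
          rw [← pow_add]; congr 1; omega,
        show ((4 : ℚ)) ^ (n + 1) = 4 ^ k * 4 ^ ((n - k) + 1) by
          rw [← pow_add]; congr 1; omega]
      field_simp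
    rw [Finset.sum_congr rfl hterm, ← Finset.mul_sum]
    have hcat : ((catalan (n + 1) : ℚ)) =
        ∑ k ∈ Finset.range (n + 1), (catalan k : ℚ) * (catalan (n - k) : ℚ) := by
      rw [catalan_succ', Finset.Nat.sum_antidiagonal_eq_sum_range_succ_mk]
      push_cast
      rfl
    rw [← hcat, changheeHalf_div]
    have h4 : ((4 : ℚ)) ^ (n + 1) ≠ 0 := by positivity
    field_simp
    ring

lemma prod_eq_sum_stirling (m : ℕ) :
    (∏ i ∈ Finset.range m, (Polynomial.C ((1 : ℚ) / 2) * Polynomial.X - Polynomial.C (i : ℚ)))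
      = ∑ j ∈ Finset.range (m + 1),
          (Polynomial.C ((1 : ℚ) / 2) * Polynomial.X) ^ j * Polynomial.C (stirling1 m j) := by
  set p : ℚ[X] := ∏ i ∈ Finset.range m, (Polynomial.X - Polynomial.C (i : ℚ)) with hp
  have hdeg : p.natDegree < m + 1 := by
    apply Nat.lt_succ_of_le
    calc p.natDegree ≤ ∑ i ∈ Finset.range m, (Polynomial.X - Polynomial.C (i : ℚ)).natDegree :=
          Polynomial.natDegree_prod_le _ _
      _ ≤ ∑ i ∈ Finset.range m, 1 := by
          apply Finset.sum_le_sum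
          intro i _
          rw [Polynomial.natDegree_X_sub_C]
      _ = m := by simp
  have h := Polynomial.as_sum_range' p (m + 1) hdeg
  have h2 := congrArg (Polynomial.aeval (Polynomial.C ((1 : ℚ) / 2) * Polynomial.X : ℚ[X])) h
  rw [hp] at h2
  simp only [map_prod, map_sub, Polynomial.aeval_X, Polynomial.aeval_C, map_sum,
    Polynomial.aeval_monomial, Polynomial.algebraMap_eq] at h2
  rw [h2]
  exact Finset.sum_congr rfl fun j _ => by rw [stirling1, ← hp]; ring

lemma map_mk (f : ℕ → ℚ) :
    PowerSeries.map (Polynomial.C : ℚ →+* ℚ[X]) (PowerSeries.mk f)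
      = PowerSeries.mk fun n => Polynomial.C (f n) := by
  ext n; simp [PowerSeries.coeff_map]

lemma numGF_poly :
    (PowerSeries.mk fun k => (Polynomial.C (changheeHalf k / (k.factorial : ℚ)) : ℚ[X])) *
      ((1 : PowerSeries (Polynomial ℚ)) + PowerSeries.mk fun k =>
        (Polynomial.C ((∏ i ∈ Finset.range k, ((1 : ℚ) / 2 - i)) / (k.factorial : ℚ)) :
          Polynomial ℚ)) = 2 := by
  have h := congrArg (PowerSeries.map (Polynomial.C : ℚ →+* ℚ[X])) numGF
  rw [map_mul, map_add, map_one, map_mk, map_mk, map_ofNat] at h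
  exact h

theorem changheeHalfPoly_eq (Ch : ℕ → Polynomial ℚ)
    (hCh : (PowerSeries.mk fun n => Polynomial.C ((n.factorial : ℚ))⁻¹ * Ch n) *
        ((1 : PowerSeries (Polynomial ℚ)) + PowerSeries.mk fun n =>
          (Polynomial.C ((∏ i ∈ Finset.range n, ((1 : ℚ) / 2 - i)) / (n.factorial : ℚ)) :
            Polynomial ℚ)) =
      2 * PowerSeries.mk fun n => Polynomial.C ((n.factorial : ℚ))⁻¹ *
        ∏ i ∈ Finset.range n,
          (Polynomial.C ((1 : ℚ) / 2) * Polynomial.X - Polynomial.C (i : ℚ)))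
    (n : ℕ) :
    Ch n = ∑ m ∈ Finset.range (n + 1), ∑ j ∈ Finset.range (m + 1),
      (Polynomial.C ((1 : ℚ) / 2) * Polynomial.X) ^ j * Polynomial.C (stirling1 m j) *
        Polynomial.C (changheeHalf (n - m)) * Polynomial.C ((n.choose m : ℚ)) := by
  set N : PowerSeries (Polynomial ℚ) :=
    PowerSeries.mk fun k => (Polynomial.C (changheeHalf k / (k.factorial : ℚ)) : ℚ[X]) with hN
  set G : PowerSeries (Polynomial ℚ) :=
    PowerSeries.mk fun k => Polynomial.C ((k.factorial : ℚ))⁻¹ *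
      ∏ i ∈ Finset.range k,
        (Polynomial.C ((1 : ℚ) / 2) * Polynomial.X - Polynomial.C (i : ℚ)) with hG
  set U : PowerSeries (Polynomial ℚ) :=
    (1 : PowerSeries (Polynomial ℚ)) + PowerSeries.mk fun k =>
      (Polynomial.C ((∏ i ∈ Finset.range k, ((1 : ℚ) / 2 - i)) / (k.factorial : ℚ)) :
        Polynomial ℚ) with hU
  have hUne : U ≠ 0 := by
    intro h
    have h0 := congrArg (PowerSeries.constantCoeff (R := Polynomial ℚ)) h
    simp [hU, PowerSeries.constantCoeff_mk] at h0
  have key : (PowerSeries.mk fun k => Polynomial.C ((k.factorial : ℚ))⁻¹ * Ch k) = G * N := by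
    apply mul_right_cancel₀ hUne
    rw [hCh, mul_comm G N, mul_right_comm, numGF_poly]
  have hc := congrArg (PowerSeries.coeff (R := Polynomial ℚ) n) key
  rw [PowerSeries.coeff_mk, PowerSeries.coeff_mul,
    Finset.Nat.sum_antidiagonal_eq_sum_range_succ_mk] at hc
  simp only [hN, hG, PowerSeries.coeff_mk] at hc
  have hfn : ((n.factorial : ℚ)) ≠ 0 := Nat.cast_ne_zero.2 n.factorial_ne_zero
  have hCn : Ch n = Polynomial.C ((n.factorial : ℚ)) *
      (Polynomial.C ((n.factorial : ℚ))⁻¹ * Ch n) := by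
    rw [← mul_assoc, ← Polynomial.C_mul, mul_inv_cancel₀ hfn, Polynomial.C_1, one_mul]
  rw [hCn, hc, Finset.mul_sum]
  apply Finset.sum_congr rfl
  intro m hm
  have hmn : m ≤ n := Nat.lt_succ_iff.mp (Finset.mem_range.mp hm)
  have hfm : ((m.factorial : ℚ)) ≠ 0 := Nat.cast_ne_zero.2 m.factorial_ne_zero
  have hfnm : (((n - m).factorial : ℚ)) ≠ 0 := Nat.cast_ne_zero.2 (n - m).factorial_ne_zero
  have hscal : (n.factorial : ℚ) * (((m.factorial : ℚ))⁻¹ *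
      (changheeHalf (n - m) / ((n - m).factorial : ℚ)))
      = changheeHalf (n - m) * (n.choose m : ℚ) := by
    rw [Nat.cast_choose ℚ hmn]
    field_simp
  calc Polynomial.C ((n.factorial : ℚ)) *
        (Polynomial.C ((m.factorial : ℚ))⁻¹ *
            (∏ i ∈ Finset.range m,
              (Polynomial.C ((1 : ℚ) / 2) * Polynomial.X - Polynomial.C (i : ℚ))) *
          Polynomial.C (changheeHalf (n - m) / ((n - m).factorial : ℚ)))
      = Polynomial.C ((n.factorial : ℚ) * (((m.factorial : ℚ))⁻¹ *
          (changheeHalf (n - m) / ((n - m).factorial : ℚ)))) *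
        ∏ i ∈ Finset.range m,
          (Polynomial.C ((1 : ℚ) / 2) * Polynomial.X - Polynomial.C (i : ℚ)) := by
        rw [Polynomial.C_mul, Polynomial.C_mul]
        ring
    _ = ∑ j ∈ Finset.range (m + 1),
        (Polynomial.C ((1 : ℚ) / 2) * Polynomial.X) ^ j * Polynomial.C (stirling1 m j) *
          Polynomial.C (changheeHalf (n - m)) * Polynomial.C ((n.choose m : ℚ)) := by
        rw [hscal, Polynomial.C_mul, prod_eq_sum_stirling, Finset.mul_sum]
        exact Finset.sum_congr rfl fun j _ => by ring
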